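/- Let ρ and σ be density operators on a finite-dimensional Hilbert space and let Π be an operator with 0 ≤ Π ≤ I. Then |√(Tr(Πσ)) − √(Tr(Πρ))| ≤ P(ρ,σ), where P(ρ,σ) = √(1 − F(ρ,σ)²) is the purified distance and F(ρ,σ) = ‖√ρ √σ‖₁ is the fidelity. -/

import Mathlib

open Matrix Kronecker Complex ComplexOrder

noncomputable section

namespace QIT

open scoped Classical

variable {n : Type*} [Fintype n] [DecidableEq n]

/-- Square root of a positive semidefinite matrix (junk value `0` otherwise). -/
def msqrt (A : Matrix n n ℂ) : Matrix n n ℂ :=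
  if h : A.PosSemidef then
    (h.1.eigenvectorUnitary : Matrix n n ℂ) *
      Matrix.diagonal ((↑) ∘ (Real.sqrt ·) ∘ h.1.eigenvalues) *
      (star (h.1.eigenvectorUnitary : Matrix n n ℂ))
  else 0

/-- Fidelity `F(ρ,σ) = Tr √(√σ ρ √σ)`. -/
def fid (ρ σ : Matrix n n ℂ) : ℝ :=
  ((msqrt (msqrt σ * ρ * msqrt σ)).trace).re

/-- Purified distance `P(ρ,σ) = √(1 - F(ρ,σ)²)`. -/
def Pdist (ρ σ : Matrix n n ℂ) : ℝ := Real.sqrt (1 - fid ρ σ ^ 2)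

/-- A density operator: positive semidefinite with unit trace. -/
def IsDensity (ρ : Matrix n n ℂ) : Prop := ρ.PosSemidef ∧ ρ.trace = 1

/-- A test (POVM element): `0 ≤ Λ ≤ I`. -/
def IsTest (Λ : Matrix n n ℂ) : Prop := Λ.PosSemidef ∧ (1 - Λ).PosSemidef

/-- Smooth hypothesis testing divergence `D_H^ε(ρ‖σ)` (log base 2). -/
def DH (ε : ℝ) (ρ σ : Matrix n n ℂ) : ℝ :=
  sSup {x : ℝ | ∃ Λ : Matrix n n ℂ, IsTest Λ ∧ (Λ * ρ).trace.re ≥ 1 - ε ∧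
    x = Real.logb 2 (1 / (Λ * σ).trace.re)}

/-- Max-relative entropy `D_max(ρ‖σ)`. -/
def Dmax (ρ σ : Matrix n n ℂ) : ℝ :=
  sInf {l : ℝ | ((((2:ℝ) ^ l : ℝ) : ℂ) • σ - ρ).PosSemidef}

/-- Matrix logarithm (base 2) via the spectral decomposition. -/
def mlog (A : Matrix n n ℂ) : Matrix n n ℂ :=
  if h : A.IsHermitian then
    (h.eigenvectorUnitary : Matrix n n ℂ) *
      Matrix.diagonal (fun i => (Real.logb 2 (h.eigenvalues i) : ℂ)) *
      (h.eigenvectorUnitary : Matrix n n ℂ)ᴴ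
  else 0

/-- Quantum relative entropy `D(ρ‖σ) = Tr ρ (log ρ - log σ)` (log base 2). -/
def Drel (ρ σ : Matrix n n ℂ) : ℝ :=
  ((ρ * mlog ρ).trace - (ρ * mlog σ).trace).re

/-- Square root of the Moore–Penrose inverse, on the support. -/
def pinvSqrt (A : Matrix n n ℂ) : Matrix n n ℂ :=
  if h : A.IsHermitian then
    (h.eigenvectorUnitary : Matrix n n ℂ) *
      Matrix.diagonal (fun i =>
        ((if h.eigenvalues i = 0 then 0 else (Real.sqrt (h.eigenvalues i))⁻¹ : ℝ) : ℂ)) *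
      (h.eigenvectorUnitary : Matrix n n ℂ)ᴴ
  else 0

variable {m : Type*} [Fintype m] [DecidableEq m]

/-- Partial trace over the second tensor factor. -/
def ptraceSnd (ρ : Matrix (n × m) (n × m) ℂ) : Matrix n n ℂ :=
  Matrix.of fun i j => ∑ k, ρ (i, k) (j, k)

/-- Partial trace over the first tensor factor. -/
def ptraceFst (ρ : Matrix (n × m) (n × m) ℂ) : Matrix m m ℂ :=
  Matrix.of fun i j => ∑ k, ρ (k, i) (k, j)


section sqrtPort

open scoped MatrixOrder

abbrev _root_.Matrix.PosSemidef.sqrt {k : Type*} [Fintype k] [DecidableEq k] {A : Matrix k k ℂ}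
    (h : A.PosSemidef) : Matrix k k ℂ :=
  (h.1.eigenvectorUnitary : Matrix k k ℂ) *
    Matrix.diagonal ((↑) ∘ (Real.sqrt ·) ∘ h.1.eigenvalues) *
    (star (h.1.eigenvectorUnitary : Matrix k k ℂ))

lemma _root_.Matrix.PosSemidef.sqrt_eq_cfcSqrt {k : Type*} [Fintype k] [DecidableEq k]
    {A : Matrix k k ℂ} (h : A.PosSemidef) : h.sqrt = CFC.sqrt A := by
  have hA0 : 0 ≤ A := h.nonneg
  rw [CFC.sqrt_eq_cfc, cfc_nnreal_eq_real _ A, h.1.cfc_eq]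
  rw [Matrix.IsHermitian.cfc, Unitary.conjStarAlgAut_apply]
  have hf : (RCLike.ofReal ∘ (fun x : ℝ => ((NNReal.sqrt x.toNNReal : NNReal) : ℝ)) ∘
      h.1.eigenvalues : k → ℂ) = (↑) ∘ (Real.sqrt ·) ∘ h.1.eigenvalues := by
    funext i
    simp [Real.coe_sqrt, Real.coe_toNNReal', max_eq_left (h.eigenvalues_nonneg i)]
  rw [hf]

lemma _root_.Matrix.PosSemidef.sqrt_mul_self {k : Type*} [Fintype k] [DecidableEq k]
    {A : Matrix k k ℂ} (h : A.PosSemidef) : h.sqrt * h.sqrt = A := by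
  rw [h.sqrt_eq_cfcSqrt]
  exact CFC.sqrt_mul_sqrt_self A h.nonneg

lemma _root_.Matrix.PosSemidef.posSemidef_sqrt {k : Type*} [Fintype k] [DecidableEq k]
    {A : Matrix k k ℂ} (h : A.PosSemidef) : h.sqrt.PosSemidef := by
  rw [h.sqrt_eq_cfcSqrt]
  exact Matrix.nonneg_iff_posSemidef.mp (CFC.sqrt_nonneg A)

lemma _root_.Matrix.PosSemidef.eq_sqrt_of_sq_eq {k : Type*} [Fintype k] [DecidableEq k]
    {A B : Matrix k k ℂ} (hB : B.PosSemidef) (hA : A.PosSemidef) (h : B ^ 2 = A) :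
    B = hA.sqrt := by
  rw [hA.sqrt_eq_cfcSqrt]
  exact (CFC.sqrt_unique (by rw [← sq]; exact h) hB.nonneg).symm

end sqrtPort

/- ### Auxiliary lemmas for statement0 -/

private lemma trace_re_nonneg' {k : Type*} [Fintype k] {A : Matrix k k ℂ}
    (hA : A.PosSemidef) : 0 ≤ A.trace.re := by
  have h : ∀ i, (0 : ℂ) ≤ A i i := fun i => by
    exact hA.diag_nonneg
  have h0 : (0 : ℂ) ≤ A.trace := Finset.sum_nonneg fun i _ => h i
  exact (Complex.le_def.mp h0).1

private lemma trace_mul_re_nonneg' {k : Type*} [Fintype k] [DecidableEq k]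
    {A B : Matrix k k ℂ} (hA : A.PosSemidef) (hB : B.PosSemidef) :
    0 ≤ (A * B).trace.re := by
  have h1 : (hA.sqrt * B * hA.sqrt).trace = (A * B).trace := by
    rw [Matrix.trace_mul_cycle, hA.sqrt_mul_self]
  have h2 : (hA.sqrt * B * hA.sqrt).PosSemidef := by
    have := hB.conjTranspose_mul_mul_same hA.sqrt
    rwa [hA.posSemidef_sqrt.1] at this
  rw [← h1]
  exact trace_re_nonneg' h2

private lemma trace_conj_inner {k : Type*} [Fintype k] (X Y : Matrix k k ℂ) :
    (Xᴴ * Y).trace = inner (𝕜 := ℂ)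
      ((WithLp.equiv 2 ((k × k) → ℂ)).symm fun p => X p.1 p.2)
      ((WithLp.equiv 2 ((k × k) → ℂ)).symm fun p => Y p.1 p.2) := by
  simp only [PiLp.inner_apply, RCLike.inner_apply, WithLp.equiv_symm_apply, WithLp.ofLp_toLp,
    Matrix.trace, Matrix.diag_apply, Matrix.mul_apply, Matrix.conjTranspose_apply,
    RCLike.star_def]
  rw [Fintype.sum_prod_type, Finset.sum_comm]
  exact Finset.sum_congr rfl fun _ _ => Finset.sum_congr rfl fun _ _ => mul_comm _ _

private lemma trace_abs_le {k : Type*} [Fintype k] (X Y : Matrix k k ℂ) :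
    ‖(Xᴴ * Y).trace‖ ≤
      Real.sqrt ((Xᴴ * X).trace.re) * Real.sqrt ((Yᴴ * Y).trace.re) := by
  set x : EuclideanSpace ℂ (k × k) := (WithLp.equiv 2 ((k × k) → ℂ)).symm fun p => X p.1 p.2 with hx
  set y : EuclideanSpace ℂ (k × k) := (WithLp.equiv 2 ((k × k) → ℂ)).symm fun p => Y p.1 p.2 with hy
  have hXX : (Xᴴ * X).trace.re = ‖x‖ ^ 2 := by
    rw [trace_conj_inner X X, ← hx]
    exact inner_self_eq_norm_sq (𝕜 := ℂ) x
  have hYY : (Yᴴ * Y).trace.re = ‖y‖ ^ 2 := by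
    rw [trace_conj_inner Y Y, ← hy]
    exact inner_self_eq_norm_sq (𝕜 := ℂ) y
  rw [trace_conj_inner X Y, ← hx, ← hy, hXX, hYY, Real.sqrt_sq (norm_nonneg _),
    Real.sqrt_sq (norm_nonneg _)]
  exact norm_inner_le_norm x y

private lemma cs_step {k : Type*} [Fintype k]
    (W R S L : Matrix k k ℂ) (hRh : Rᴴ = R) (hSh : Sᴴ = S) (hLh : Lᴴ = L) :
    ‖(Wᴴ * (R * (L * L) * S)).trace‖ ≤
      Real.sqrt (((Wᴴ * W) * (S * (L * L) * S)).trace.re) *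
        Real.sqrt (((L * L) * (R * R)).trace.re) := by
  have hXc : (W * (S * L))ᴴ = L * S * Wᴴ := by
    rw [Matrix.conjTranspose_mul, Matrix.conjTranspose_mul, hSh, hLh]
  have e1 : ((W * (S * L))ᴴ * (R * L)).trace = (Wᴴ * (R * (L * L) * S)).trace := by
    rw [hXc]
    have h1 : (L * S * Wᴴ) * (R * L) = (L * S) * (Wᴴ * (R * L)) := by noncomm_ring
    have h2 : (Wᴴ * (R * L)) * (L * S) = Wᴴ * (R * (L * L) * S) := by noncomm_ring
    rw [h1, Matrix.trace_mul_comm, h2]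
  have e2 : ((W * (S * L))ᴴ * (W * (S * L))).trace
      = ((Wᴴ * W) * (S * (L * L) * S)).trace := by
    rw [hXc]
    have h1 : (L * S * Wᴴ) * (W * (S * L)) = (L * S) * ((Wᴴ * W) * (S * L)) := by noncomm_ring
    have h2 : ((Wᴴ * W) * (S * L)) * (L * S) = (Wᴴ * W) * (S * (L * L) * S) := by noncomm_ring
    rw [h1, Matrix.trace_mul_comm, h2]
  have e3 : ((R * L)ᴴ * (R * L)).trace = ((L * L) * (R * R)).trace := by
    rw [Matrix.conjTranspose_mul, hRh, hLh]
    have h1 : (L * R) * (R * L) = (L * (R * R)) * L := by noncomm_ring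
    have h2 : L * (L * (R * R)) = (L * L) * (R * R) := by noncomm_ring
    rw [h1, Matrix.trace_mul_comm, h2]
  rw [← e1, ← e2, ← e3]
  exact trace_abs_le _ _

private lemma polar_aux {k : Type*} [Fintype k] [DecidableEq k]
    {B M : Matrix k k ℂ} (hM : M.PosSemidef) (hBB : Bᴴ * B = M) :
    ∃ W : Matrix k k ℂ, Wᴴ * B = hM.sqrt ∧ (1 - Wᴴ * W).PosSemidef := by
  classical
  set V : Matrix k k ℂ := (hM.1.eigenvectorUnitary : Matrix k k ℂ) with hVdef
  set lam : k → ℝ := hM.1.eigenvalues with hlam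
  have hV1 : Vᴴ * V = 1 := by
    have := Matrix.mem_unitaryGroup_iff'.mp hM.1.eigenvectorUnitary.2
    rwa [Matrix.star_eq_conjTranspose] at this
  have hV2 : V * Vᴴ = 1 := by
    have := Matrix.mem_unitaryGroup_iff.mp hM.1.eigenvectorUnitary.2
    rwa [Matrix.star_eq_conjTranspose] at this
  have hspec : M = V * Matrix.diagonal (fun i => ((lam i : ℝ) : ℂ)) * Vᴴ := by
    have := hM.1.spectral_theorem
    rwa [Unitary.conjStarAlgAut_apply, Matrix.star_eq_conjTranspose] at this
  have hconj : ∀ a b : k → ℂ, (V * Matrix.diagonal a * Vᴴ) * (V * Matrix.diagonal b * Vᴴ)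
      = V * Matrix.diagonal (fun i => a i * b i) * Vᴴ := by
    intro a b
    have h1 : (V * Matrix.diagonal a * Vᴴ) * (V * Matrix.diagonal b * Vᴴ)
        = V * (Matrix.diagonal a * (Vᴴ * V) * Matrix.diagonal b) * Vᴴ := by noncomm_ring
    rw [h1, hV1, Matrix.mul_one, Matrix.diagonal_mul_diagonal]
  have lnn : ∀ i, 0 ≤ lam i := fun i => hM.eigenvalues_nonneg i
  set f : k → ℝ := fun i => if lam i = 0 then 0 else (Real.sqrt (lam i))⁻¹ with hf
  set P : Matrix k k ℂ := V * Matrix.diagonal (fun i => ((f i : ℝ) : ℂ)) * Vᴴ with hP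
  have hPh : Pᴴ = P := by
    rw [hP, Matrix.conjTranspose_mul, Matrix.conjTranspose_mul, Matrix.conjTranspose_conjTranspose,
      Matrix.diagonal_conjTranspose]
    have : star (fun i => ((f i : ℝ) : ℂ)) = fun i => ((f i : ℝ) : ℂ) := by
      funext i
      simp [Complex.conj_ofReal]
    rw [this]
    noncomm_ring
  refine ⟨B * P, ?_, ?_⟩
  · -- Wᴴ * B = hM.sqrt
    have hWB : (B * P)ᴴ * B = P * M := by
      rw [Matrix.conjTranspose_mul, hPh, Matrix.mul_assoc, hBB]
    have hdiag : (fun i => ((f i : ℝ) : ℂ) * ((lam i : ℝ) : ℂ))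
        = fun i => ((Real.sqrt (lam i) : ℝ) : ℂ) := by
      funext i
      have hr : f i * lam i = Real.sqrt (lam i) := by
        by_cases h : lam i = 0
        · simp [hf, h]
        · have hpos : 0 < lam i := lt_of_le_of_ne (lnn i) (Ne.symm h)
          have hs : Real.sqrt (lam i) ≠ 0 := by positivity
          rw [hf]
          simp only [if_neg h]
          rw [inv_mul_eq_div, div_eq_iff hs]
          exact (Real.mul_self_sqrt (lnn i)).symm
      rw [← Complex.ofReal_mul, hr]
    have hPM : P * M = V * Matrix.diagonal (fun i => ((Real.sqrt (lam i) : ℝ) : ℂ)) * Vᴴ := by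
      conv_lhs => rw [hP, hspec]
      rw [hconj, hdiag]
    rw [hWB, hPM]
    -- now show V * diagonal (√ lam) * Vᴴ = hM.sqrt
    have hSMpsd : (V * Matrix.diagonal (fun i => ((Real.sqrt (lam i) : ℝ) : ℂ)) * Vᴴ).PosSemidef := by
      refine Matrix.PosSemidef.mul_mul_conjTranspose_same ?_ V
      refine Matrix.posSemidef_diagonal_iff.mpr fun i => ?_
      exact Complex.zero_le_real.mpr (Real.sqrt_nonneg _)
    have hSM2 : (V * Matrix.diagonal (fun i => ((Real.sqrt (lam i) : ℝ) : ℂ)) * Vᴴ) ^ 2 = M := by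
      rw [pow_two, hconj]
      have : (fun i => ((Real.sqrt (lam i) : ℝ) : ℂ) * ((Real.sqrt (lam i) : ℝ) : ℂ))
          = fun i => ((lam i : ℝ) : ℂ) := by
        funext i
        rw [← Complex.ofReal_mul, Real.mul_self_sqrt (lnn i)]
      rw [this, ← hspec]
    exact (hSMpsd.eq_sqrt_of_sq_eq hM hSM2).symm
  · -- (1 - Wᴴ W) PSD
    have hWW : (B * P)ᴴ * (B * P) = P * M * P := by
      rw [Matrix.conjTranspose_mul, hPh]
      have h1 : P * Bᴴ * (B * P) = P * (Bᴴ * B) * P := by noncomm_ring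
      rw [h1, hBB]
    have hgg : (fun i => ((f i : ℝ) : ℂ) * ((lam i : ℝ) : ℂ) * ((f i : ℝ) : ℂ))
        = (fun i => if lam i = 0 then (0 : ℂ) else 1) := by
      funext i
      by_cases h : lam i = 0
      · simp [hf, h]
      · have hpos : 0 < lam i := lt_of_le_of_ne (lnn i) (Ne.symm h)
        have hs : Real.sqrt (lam i) ≠ 0 := by positivity
        have h2 : lam i * (Real.sqrt (lam i))⁻¹ = Real.sqrt (lam i) := by
          rw [mul_inv_eq_iff_eq_mul₀ hs]
          exact (Real.mul_self_sqrt (lnn i)).symm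
        have hr : f i * lam i * f i = 1 := by
          rw [hf]
          simp only [if_neg h]
          rw [mul_assoc, h2, inv_mul_cancel₀ hs]
        rw [if_neg h, ← Complex.ofReal_mul, ← Complex.ofReal_mul, hr, Complex.ofReal_one]
    have hQ : P * M * P = V * Matrix.diagonal
        (fun i => if lam i = 0 then (0 : ℂ) else 1) * Vᴴ := by
      conv_lhs => rw [hP, hspec]
      rw [hconj, hconj]
      congr 1
      congr 1
      exact congrArg Matrix.diagonal hgg
    have hone : (1 : Matrix k k ℂ) = V * Matrix.diagonal (fun _ => (1 : ℂ)) * Vᴴ := by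
      rw [Matrix.diagonal_one, Matrix.mul_one, hV2]
    have hsub : 1 - (B * P)ᴴ * (B * P)
        = V * Matrix.diagonal (fun i => if lam i = 0 then (1 : ℂ) else 0) * Vᴴ := by
      rw [hWW, hQ]
      rw [hone]
      rw [← Matrix.sub_mul, ← Matrix.mul_sub, Matrix.diagonal_sub]
      have hgg2 : ((fun _ => (1 : ℂ)) - fun i => if lam i = 0 then (0 : ℂ) else 1)
          = fun i => if lam i = 0 then (1 : ℂ) else 0 := by
        funext i
        by_cases h : lam i = 0 <;> simp [Pi.sub_apply, h]
      congr 1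
      congr 1
      exact congrArg Matrix.diagonal hgg2
    rw [hsub]
    refine Matrix.PosSemidef.mul_mul_conjTranspose_same ?_ V
    refine Matrix.posSemidef_diagonal_iff.mpr fun i => ?_
    by_cases h : lam i = 0 <;> simp [h]

private lemma scalar_final {p q F : ℝ} (hp0 : 0 ≤ p) (hp1 : p ≤ 1) (hq0 : 0 ≤ q) (hq1 : q ≤ 1)
    (hF0 : 0 ≤ F)
    (hF : F ≤ Real.sqrt q * Real.sqrt p + Real.sqrt (1 - q) * Real.sqrt (1 - p)) :
    |Real.sqrt q - Real.sqrt p| ≤ Real.sqrt (1 - F ^ 2) := by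
  set a := Real.sqrt p with hadef
  set b := Real.sqrt q with hbdef
  set a' := Real.sqrt (1 - p) with ha'def
  set b' := Real.sqrt (1 - q) with hb'def
  have ha : a ^ 2 = p := Real.sq_sqrt hp0
  have hb : b ^ 2 = q := Real.sq_sqrt hq0
  have ha' : a' ^ 2 = 1 - p := Real.sq_sqrt (by linarith)
  have hb' : b' ^ 2 = 1 - q := Real.sq_sqrt (by linarith)
  have ha0 : 0 ≤ a := Real.sqrt_nonneg _
  have hb0 : 0 ≤ b := Real.sqrt_nonneg _
  have ha'0 : 0 ≤ a' := Real.sqrt_nonneg _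
  have hb'0 : 0 ≤ b' := Real.sqrt_nonneg _
  have h1 : b * a + b' * a' ≤ 1 := by nlinarith [sq_nonneg (a - b), sq_nonneg (a' - b')]
  have key : (b - a) ^ 2 ≤ 1 - F ^ 2 := by
    nlinarith [mul_nonneg (mul_nonneg hb0 ha0) (sub_nonneg.mpr h1),
      mul_nonneg hb0 ha0, mul_nonneg hb'0 ha'0, sq_nonneg (b * a' - b' * a),
      mul_nonneg (add_nonneg (mul_nonneg hb0 ha0) (mul_nonneg hb'0 ha'0)) hF0]
  calc |b - a| = Real.sqrt ((b - a) ^ 2) := (Real.sqrt_sq_eq_abs _).symm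
    _ ≤ Real.sqrt (1 - F ^ 2) := Real.sqrt_le_sqrt key

/-- `|√Tr(Λσ) − √Tr(Λρ)| ≤ P(ρ,σ)` for any test `0 ≤ Λ ≤ I`. -/
theorem statement0 {n : Type*} [Fintype n] [DecidableEq n]
    (ρ σ Λ : Matrix n n ℂ) (hρ : IsDensity ρ) (hσ : IsDensity σ) (hΛ : IsTest Λ) :
    |Real.sqrt ((Λ * σ).trace.re) - Real.sqrt ((Λ * ρ).trace.re)| ≤ Pdist ρ σ := by
  classical
  obtain ⟨hρ1, hρtr⟩ := hρ
  obtain ⟨hσ1, hσtr⟩ := hσ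
  obtain ⟨hΛ1, hΛ2⟩ := hΛ
  have hSρ := hρ1.posSemidef_sqrt
  have hSσ := hσ1.posSemidef_sqrt
  have hSΛ := hΛ1.posSemidef_sqrt
  have hSΛ' := hΛ2.posSemidef_sqrt
  -- M = √σ ρ √σ is PSD
  have hM : (hσ1.sqrt * ρ * hσ1.sqrt).PosSemidef := by
    have := hρ1.conjTranspose_mul_mul_same hσ1.sqrt
    rwa [hSσ.1] at this
  have hBB : (hρ1.sqrt * hσ1.sqrt)ᴴ * (hρ1.sqrt * hσ1.sqrt) = hσ1.sqrt * ρ * hσ1.sqrt := by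
    rw [Matrix.conjTranspose_mul, hSρ.1, hSσ.1]
    have h1 : hσ1.sqrt * hρ1.sqrt * (hρ1.sqrt * hσ1.sqrt)
        = hσ1.sqrt * (hρ1.sqrt * hρ1.sqrt) * hσ1.sqrt := by noncomm_ring
    rw [h1, hρ1.sqrt_mul_self]
  obtain ⟨W, hWB, hWQ⟩ := polar_aux hM hBB
  -- fid in terms of W
  have hfid : fid ρ σ = hM.sqrt.trace.re := by
    have hmsσ : msqrt σ = hσ1.sqrt := by unfold msqrt; rw [dif_pos hσ1]
    unfold fid
    rw [hmsσ]
    unfold msqrt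
    rw [dif_pos hM]
  -- nonnegativity of fidelity
  have hF0 : 0 ≤ fid ρ σ := by
    rw [hfid]
    exact trace_re_nonneg' hM.posSemidef_sqrt
  -- p and q and their bounds
  set p := (Λ * ρ).trace.re with hpdef
  set q := (Λ * σ).trace.re with hqdef
  have hp0 : 0 ≤ p := trace_mul_re_nonneg' hΛ1 hρ1
  have hq0 : 0 ≤ q := trace_mul_re_nonneg' hΛ1 hσ1
  have hp1' : ((1 - Λ) * ρ).trace.re = 1 - p := by
    rw [Matrix.sub_mul, Matrix.one_mul, Matrix.trace_sub, hρtr]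
    simp [Complex.sub_re, hpdef]
  have hq1' : ((1 - Λ) * σ).trace.re = 1 - q := by
    rw [Matrix.sub_mul, Matrix.one_mul, Matrix.trace_sub, hσtr]
    simp [Complex.sub_re, hqdef]
  have hp1 : p ≤ 1 := by
    have := trace_mul_re_nonneg' hΛ2 hρ1
    rw [hp1'] at this; linarith
  have hq1 : q ≤ 1 := by
    have := trace_mul_re_nonneg' hΛ2 hσ1
    rw [hq1'] at this; linarith
  -- splitting the trace
  have hsplit : hM.sqrt.trace
      = (Wᴴ * (hρ1.sqrt * (hΛ1.sqrt * hΛ1.sqrt) * hσ1.sqrt)).trace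
        + (Wᴴ * (hρ1.sqrt * (hΛ2.sqrt * hΛ2.sqrt) * hσ1.sqrt)).trace := by
    rw [← hWB, ← Matrix.trace_add, hΛ1.sqrt_mul_self, hΛ2.sqrt_mul_self]
    congr 1
    noncomm_ring
  -- monotonicity bound : Tr(Q C) ≤ Tr(C) for C PSD, Q = WᴴW ≤ 1
  have hmono : ∀ Θ : Matrix n n ℂ, Θ.PosSemidef → ((1 - Θ).PosSemidef) →
      ((Wᴴ * W) * (hσ1.sqrt * Θ * hσ1.sqrt)).trace.re ≤ (Θ * σ).trace.re := by
    intro Θ hΘ hΘ'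
    have hC : (hσ1.sqrt * Θ * hσ1.sqrt).PosSemidef := by
      have := hΘ.conjTranspose_mul_mul_same hσ1.sqrt
      rwa [hSσ.1] at this
    have h1 : (hσ1.sqrt * Θ * hσ1.sqrt).trace = (Θ * σ).trace := by
      rw [Matrix.trace_mul_cycle, hσ1.sqrt_mul_self, Matrix.trace_mul_comm]
    have h2 : 0 ≤ ((1 - Wᴴ * W) * (hσ1.sqrt * Θ * hσ1.sqrt)).trace.re :=
      trace_mul_re_nonneg' hWQ hC
    have h3 : (1 - Wᴴ * W) * (hσ1.sqrt * Θ * hσ1.sqrt)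
        = (hσ1.sqrt * Θ * hσ1.sqrt) - (Wᴴ * W) * (hσ1.sqrt * Θ * hσ1.sqrt) := by noncomm_ring
    rw [h3, Matrix.trace_sub, Complex.sub_re, h1] at h2
    linarith
  -- the two Cauchy–Schwarz bounds
  have hterm1 : ‖(Wᴴ * (hρ1.sqrt * (hΛ1.sqrt * hΛ1.sqrt) * hσ1.sqrt)).trace‖
      ≤ Real.sqrt q * Real.sqrt p := by
    have hcs := cs_step W hρ1.sqrt hσ1.sqrt hΛ1.sqrt hSρ.1 hSσ.1 hSΛ.1
    rw [hΛ1.sqrt_mul_self, hρ1.sqrt_mul_self] at hcs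
    rw [hΛ1.sqrt_mul_self]
    refine le_trans hcs (mul_le_mul_of_nonneg_right ?_ (Real.sqrt_nonneg _))
    refine Real.sqrt_le_sqrt ?_
    exact hmono Λ hΛ1 hΛ2
  have hterm2 : ‖(Wᴴ * (hρ1.sqrt * (hΛ2.sqrt * hΛ2.sqrt) * hσ1.sqrt)).trace‖
      ≤ Real.sqrt (1 - q) * Real.sqrt (1 - p) := by
    have hcs := cs_step W hρ1.sqrt hσ1.sqrt hΛ2.sqrt hSρ.1 hSσ.1 hSΛ'.1
    rw [hΛ2.sqrt_mul_self, hρ1.sqrt_mul_self] at hcs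
    rw [hΛ2.sqrt_mul_self]
    refine le_trans hcs (mul_le_mul ?_ ?_ (Real.sqrt_nonneg _) (Real.sqrt_nonneg _))
    · refine Real.sqrt_le_sqrt ?_
      have h1Λ : (1 - (1 - Λ)).PosSemidef := by
        have h : (1 - (1 - Λ)) = Λ := by noncomm_ring
        rw [h]; exact hΛ1
      have := hmono (1 - Λ) hΛ2 h1Λ
      rwa [hq1'] at this
    · exact le_of_eq (by rw [hp1'])
  -- the fidelity bound
  have hF : fid ρ σ ≤ Real.sqrt q * Real.sqrt p + Real.sqrt (1 - q) * Real.sqrt (1 - p) := by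
    rw [hfid, hsplit, Complex.add_re]
    have r1 := (Complex.re_le_norm _).trans hterm1
    have r2 := (Complex.re_le_norm _).trans hterm2
    linarith
  rw [Pdist]
  exact scalar_final hp0 hp1 hq0 hq1 hF0 hF

end QIT
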